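/- Let p ≡ 3 (mod 4) be prime and q = p³. Suppose x, z, y, w ∈ (ℤ/qℤ)² and B(x,z) = B(y,w) = B is a non-isotropic line, where B(x,z) := {v : ‖v−x‖ = ‖v−z‖}. Then ‖x − y‖ = ‖z − w‖. -/

import Mathlib

/-- In `ZMod (p^3)`, a non-unit times `p^2` is zero. -/
lemma nonunit_mul_p_sq (p : ℕ) (hp : p.Prime) (α : ZMod (p ^ 3)) (hα : ¬ IsUnit α) :
    α * (p : ZMod (p ^ 3)) ^ 2 = 0 := by
  haveI : NeZero (p ^ 3) := ⟨pow_ne_zero 3 hp.ne_zero⟩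
  have h1 : ¬ (α.val).Coprime (p ^ 3) := by
    intro h
    exact hα (by rw [← ZMod.natCast_zmod_val α]; exact (ZMod.isUnit_iff_coprime _ _).mpr h)
  have h2 : p ∣ α.val := by
    by_contra h
    exact h1 ((Nat.coprime_comm.mp (hp.coprime_iff_not_dvd.mpr h)).pow_right 3)
  obtain ⟨k, hk⟩ := h2
  have : α = (p : ZMod (p ^ 3)) * (k : ZMod (p ^ 3)) := by
    rw [← ZMod.natCast_zmod_val α, hk]; push_cast; ring
  rw [this]
  have h3 : ((p ^ 3 : ℕ) : ZMod (p ^ 3)) = 0 := ZMod.natCast_self _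
  push_cast at h3
  linear_combination (k : ZMod (p ^ 3)) * h3

lemma p_sq_ne_zero (p : ℕ) (hp : p.Prime) : (p : ZMod (p ^ 3)) ^ 2 ≠ 0 := by
  intro h
  have : ((p ^ 2 : ℕ) : ZMod (p ^ 3)) = 0 := by push_cast; exact h
  rw [ZMod.natCast_eq_zero_iff] at this
  have := (Nat.pow_dvd_pow_iff_le_right hp.one_lt).mp this
  omega

/-- If two linear equations define the same set and the second has unit `a`, then the
first is a unit multiple of the second. -/
lemma line_scaling (p : ℕ) (hp : p.Prime) (a b c α β γ : ZMod (p ^ 3)) (ha : IsUnit a)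
    (H : ∀ v1 v2 : ZMod (p ^ 3), α * v1 + β * v2 = γ ↔ a * v1 + b * v2 = c) :
    ∃ t : ZMod (p ^ 3), IsUnit t ∧ α = t * a ∧ β = t * b ∧ γ = t * c := by
  set ai := a⁻¹ with hai_def
  have hai : a * ai = 1 := ZMod.mul_inv_of_unit a ha
  have hγ : α * (ai * c) + β * 0 = γ :=
    (H (ai * c) 0).mpr (by linear_combination c * hai)
  have hβ : α * (ai * (c - b)) + β * 1 = γ :=
    (H (ai * (c - b)) 1).mpr (by linear_combination (c - b) * hai)
  have hαu : IsUnit α := by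
    by_contra hα
    have hz : α * (p : ZMod (p ^ 3)) ^ 2 = 0 := nonunit_mul_p_sq p hp α hα
    have h1 : α * (ai * c + (p : ZMod (p ^ 3)) ^ 2) + β * 0 = γ := by
      linear_combination hγ + hz
    have h2 := (H _ 0).mp h1
    have : (p : ZMod (p ^ 3)) ^ 2 = 0 := by
      linear_combination ai * h2 - (ai * c + (p : ZMod (p ^ 3)) ^ 2) * hai
    exact p_sq_ne_zero p hp this
  refine ⟨α * ai, hαu.mul (IsUnit.of_mul_eq_one (a := ai) a (by linear_combination hai)), ?_, ?_, ?_⟩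
  · linear_combination -α * hai
  · linear_combination hβ - hγ
  · linear_combination -hγ

theorem nonisotropic_bisector_distance (p : ℕ) (hp : p.Prime) (hp4 : p % 4 = 3)
    (x z y w : ZMod (p ^ 3) × ZMod (p ^ 3))
    (hB : {v : ZMod (p ^ 3) × ZMod (p ^ 3) |
            (v.1 - x.1) ^ 2 + (v.2 - x.2) ^ 2 = (v.1 - z.1) ^ 2 + (v.2 - z.2) ^ 2} =
          {v : ZMod (p ^ 3) × ZMod (p ^ 3) |
            (v.1 - y.1) ^ 2 + (v.2 - y.2) ^ 2 = (v.1 - w.1) ^ 2 + (v.2 - w.2) ^ 2})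
    (hiso : ∃ a b c : ZMod (p ^ 3), IsUnit a ∧ IsUnit b ∧ IsUnit (a ^ 2 + b ^ 2) ∧
      {v : ZMod (p ^ 3) × ZMod (p ^ 3) |
        (v.1 - x.1) ^ 2 + (v.2 - x.2) ^ 2 = (v.1 - z.1) ^ 2 + (v.2 - z.2) ^ 2} =
        {v : ZMod (p ^ 3) × ZMod (p ^ 3) | a * v.1 + b * v.2 = c}) :
    (x.1 - y.1) ^ 2 + (x.2 - y.2) ^ 2 = (z.1 - w.1) ^ 2 + (z.2 - w.2) ^ 2 := by
  haveI : NeZero (p ^ 3) := ⟨pow_ne_zero 3 hp.ne_zero⟩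
  obtain ⟨a, b, c, ha, hb, hab, hline⟩ := hiso
  have hline2 := hB.symm.trans hline
  -- 2 is a unit
  have hp2 : p ≠ 2 := by omega
  have h2u : IsUnit (2 : ZMod (p ^ 3)) := by
    have : IsUnit ((2 : ℕ) : ZMod (p ^ 3)) := (ZMod.isUnit_iff_coprime _ _).mpr
      (((Nat.coprime_primes Nat.prime_two hp).mpr (Ne.symm hp2)).pow_right 3)
    simpa using this
  set h := (2 : ZMod (p ^ 3))⁻¹ with hh_def
  have h2 : 2 * h = 1 := ZMod.mul_inv_of_unit 2 h2u
  -- extract linear form for bisector of x,z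
  have H1 : ∀ v1 v2 : ZMod (p ^ 3),
      2 * (z.1 - x.1) * v1 + 2 * (z.2 - x.2) * v2 = z.1 ^ 2 + z.2 ^ 2 - x.1 ^ 2 - x.2 ^ 2 ↔
      a * v1 + b * v2 = c := by
    intro v1 v2
    have := Set.ext_iff.mp hline ⟨v1, v2⟩
    simp only [Set.mem_setOf_eq] at this
    constructor
    · intro hv; exact this.mp (by linear_combination hv)
    · intro hv; linear_combination this.mpr hv
  have H2 : ∀ v1 v2 : ZMod (p ^ 3),
      2 * (w.1 - y.1) * v1 + 2 * (w.2 - y.2) * v2 = w.1 ^ 2 + w.2 ^ 2 - y.1 ^ 2 - y.2 ^ 2 ↔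
      a * v1 + b * v2 = c := by
    intro v1 v2
    have := Set.ext_iff.mp hline2 ⟨v1, v2⟩
    simp only [Set.mem_setOf_eq] at this
    constructor
    · intro hv; exact this.mp (by linear_combination hv)
    · intro hv; linear_combination this.mpr hv
  obtain ⟨t, ht, hE1, hE2, hE3⟩ := line_scaling p hp a b c _ _ _ ha H1
  obtain ⟨s, hs, hF1, hF2, hF3⟩ := line_scaling p hp a b c _ _ _ ha H2
  set ti := t⁻¹ with hti_def
  have htt : t * ti = 1 := ZMod.mul_inv_of_unit t ht
  set si := s⁻¹ with hsi_def
  have hss : s * si = 1 := ZMod.mul_inv_of_unit s hs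
  have hz1 : z.1 = x.1 + t * a * h := by linear_combination h * hE1 - (z.1 - x.1) * h2
  have hz2 : z.2 = x.2 + t * b * h := by linear_combination h * hE2 - (z.2 - x.2) * h2
  have hw1 : w.1 = y.1 + s * a * h := by linear_combination h * hF1 - (w.1 - y.1) * h2
  have hw2 : w.2 = y.2 + s * b * h := by linear_combination h * hF2 - (w.2 - y.2) * h2
  rw [hz1, hz2] at hE3
  rw [hw1, hw2] at hF3
  have hc1 : a * x.1 + b * x.2 + t * h ^ 2 * (a ^ 2 + b ^ 2) = c := by
    linear_combination ti * hE3 - (a * x.1 + b * x.2) * h2 -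
      (2 * h * (a * x.1 + b * x.2) + t * h ^ 2 * (a ^ 2 + b ^ 2) - c) * htt
  have hc2 : a * y.1 + b * y.2 + s * h ^ 2 * (a ^ 2 + b ^ 2) = c := by
    linear_combination si * hF3 - (a * y.1 + b * y.2) * h2 -
      (2 * h * (a * y.1 + b * y.2) + s * h ^ 2 * (a ^ 2 + b ^ 2) - c) * hss
  rw [hz1, hz2, hw1, hw2]
  linear_combination (-2 * (t - s) * h) * (hc1 - hc2) +
    (t - s) ^ 2 * h ^ 2 * (a ^ 2 + b ^ 2) * h2
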